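/- Let q be a prime power and k ≥ 3. Let D = {(x_1,...,x_k) ∈ GF(q)^k \ {0} : x_1 x_2 x_3 (x_1 + x_2 + x_3) = 0} and n = #D = 4q^{k-1} - 6q^{k-2} + 3q^{k-3} - 1. Then for every nonzero a ∈ GF(q)^k, the number of x ∈ D with ⟨a,x⟩ ≠ 0 is at least 3q^{k-1} - 6q^{k-2} + 3q^{k-3}, with equality attained (e.g., for a = e_1). -/

import Mathlib

open Finset

set_option linter.unusedSectionVars false
variable {F : Type} [Field F] [Fintype F] [DecidableEq F]

lemma filter_lt3_eq {k : ℕ} (hk : 3 ≤ k) :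
    (Finset.univ.filter (fun i : Fin k => (i : ℕ) < 3)) =
      {⟨0, by omega⟩, ⟨1, by omega⟩, ⟨2, by omega⟩} := by
  ext i
  simp only [mem_filter, mem_univ, true_and, mem_insert, mem_singleton, Fin.ext_iff]
  omega

lemma card_filter_not_lt3 {k : ℕ} (hk : 3 ≤ k) :
    Fintype.card {i : Fin k // ¬ (i : ℕ) < 3} = k - 3 := by
  rw [Fintype.card_subtype]
  have h := Finset.card_filter_add_card_filter_not
    (s := (Finset.univ : Finset (Fin k))) (p := fun i : Fin k => (i : ℕ) < 3)
  rw [filter_lt3_eq hk] at h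
  rw [card_insert_of_notMem, card_insert_of_notMem, card_singleton] at h
  · simp only [card_univ, Fintype.card_fin] at h; omega
  · simp [Fin.ext_iff]
  · simp [Fin.ext_iff]

/-- The equivalence splitting off the first three coordinates. -/
def splitE {k : ℕ} (hk : 3 ≤ k) :
    (Fin k → F) ≃ (F × F × F) × ({i : Fin k // ¬ (i : ℕ) < 3} → F) where
  toFun x := ((x ⟨0, by omega⟩, x ⟨1, by omega⟩, x ⟨2, by omega⟩), fun i => x i.1)
  invFun w i :=
    if h : (i : ℕ) < 3 then
      (if (i : ℕ) = 0 then w.1.1 else if (i : ℕ) = 1 then w.1.2.1 else w.1.2.2)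
    else w.2 ⟨i, h⟩
  left_inv x := by
    funext i
    dsimp only
    by_cases h : (i : ℕ) < 3
    · rw [dif_pos h]
      have h3 : (i:ℕ) = 0 ∨ (i:ℕ) = 1 ∨ (i:ℕ) = 2 := by omega
      rcases h3 with h0 | h0 | h0 <;>
        simp only [h0] <;> norm_num <;> congr 1 <;> exact (Fin.ext h0).symm
    · rw [dif_neg h]
  right_inv w := by
    dsimp only
    ext i
    · simp
    · simp
    · simp
    · simp only []
      rw [dif_neg i.2]

lemma card_cond {k : ℕ} (hk : 3 ≤ k) (R : F → F → F → Prop)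
    [∀ a b c, Decidable (R a b c)] :
    (Finset.univ.filter (fun x : Fin k → F =>
        R (x ⟨0, by omega⟩) (x ⟨1, by omega⟩) (x ⟨2, by omega⟩))).card =
      (Finset.univ.filter (fun p : F × F × F => R p.1 p.2.1 p.2.2)).card *
        (Fintype.card F) ^ (k - 3) := by
  rw [← Fintype.card_subtype, ← Fintype.card_subtype]
  have e : {x : Fin k → F // R (x ⟨0, by omega⟩) (x ⟨1, by omega⟩) (x ⟨2, by omega⟩)} ≃
      {p : F × F × F // R p.1 p.2.1 p.2.2} × ({i : Fin k // ¬ (i : ℕ) < 3} → F) :=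
    ((splitE hk).subtypeEquiv (fun x => Iff.rfl)).trans
      (Equiv.prodSubtypeFstEquivSubtypeProd (p := fun p : F × F × F => R p.1 p.2.1 p.2.2))
  rw [Fintype.card_congr e, Fintype.card_prod, Fintype.card_fun, card_filter_not_lt3 hk,
    Fintype.card_subtype]

lemma card_c (a b : F) :
    (Finset.univ.filter (fun c : F => c ≠ 0 ∧ a + b + c ≠ 0)).card =
      if a + b = 0 then Fintype.card F - 1 else Fintype.card F - 2 := by
  have hiff : ∀ c : F, a + b + c = 0 ↔ c = -(a+b) := by
    intro c; constructor <;> intro h <;> linear_combination h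
  have hset : Finset.univ.filter (fun c : F => c ≠ 0 ∧ a + b + c ≠ 0) =
      (Finset.univ.erase 0).erase (-(a+b)) := by
    ext c
    simp only [mem_filter, mem_univ, true_and, mem_erase, ne_eq, hiff]
    tauto
  rw [hset]
  by_cases h : a + b = 0
  · rw [if_pos h, h, neg_zero, Finset.erase_idem, card_erase_of_mem (mem_univ 0), card_univ]
  · rw [if_neg h, card_erase_of_mem, card_erase_of_mem (mem_univ 0), card_univ]
    · omega
    · exact mem_erase.mpr ⟨neg_ne_zero.mpr (fun h' => h h'), mem_univ _⟩

lemma card_ne_zero_filter : (Finset.univ.filter (fun b : F => b ≠ 0)).card = Fintype.card F - 1 := by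
  rw [Finset.filter_ne', card_erase_of_mem (mem_univ 0), card_univ]

lemma sum_b (a : F) (ha : a ≠ 0) :
    ∑ b ∈ Finset.univ.filter (fun b : F => b ≠ 0),
      (Finset.univ.filter (fun c : F => c ≠ 0 ∧ a + b + c ≠ 0)).card =
      (Fintype.card F - 1) + (Fintype.card F - 2) * (Fintype.card F - 2) := by
  set q := Fintype.card F
  have hmem : -a ∈ Finset.univ.filter (fun b : F => b ≠ 0) := by
    simp [neg_ne_zero, ha]
  rw [← Finset.add_sum_erase _ _ hmem]
  congr 1
  · rw [card_c, if_pos (by ring)]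
  · have h2 : Fintype.card F - 1 - 1 = q - 2 := by omega
    have hcg : ∀ b ∈ (Finset.univ.filter (fun b : F => b ≠ 0)).erase (-a),
        (Finset.univ.filter (fun c : F => c ≠ 0 ∧ a + b + c ≠ 0)).card = q - 2 := by
      intro b hb
      simp only [mem_erase, mem_filter, mem_univ, true_and] at hb
      rw [card_c, if_neg]
      intro h
      exact hb.1 (by linear_combination h)
    rw [Finset.sum_congr rfl hcg, Finset.sum_const, smul_eq_mul,
      card_erase_of_mem hmem, card_ne_zero_filter, h2]

def badP (p : F × F × F) : Prop := p.1 ≠ 0 ∧ p.2.1 ≠ 0 ∧ p.2.2 ≠ 0 ∧ p.1 + p.2.1 + p.2.2 ≠ 0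

instance : DecidablePred (badP (F := F)) := fun _ => by unfold badP; infer_instance

lemma card_bad :
    (Finset.univ.filter (badP (F := F))).card =
      (Fintype.card F - 1) * ((Fintype.card F - 1) + (Fintype.card F - 2) * (Fintype.card F - 2)) := by
  set q := Fintype.card F with hq
  rw [Finset.card_filter]
  rw [Fintype.sum_prod_type]
  have step1 : ∀ a : F, (∑ p : F × F, if badP (a, p.1, p.2) then 1 else 0) =
      if a ≠ 0 then (q - 1) + (q - 2) * (q - 2) else 0 := by
    intro a
    by_cases ha : a = 0
    · simp [badP, ha]
    · rw [if_pos ha, ← sum_b a ha]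
      rw [Fintype.sum_prod_type]
      rw [Finset.sum_filter]
      apply Finset.sum_congr rfl
      intro b _
      by_cases hb : b = 0
      · simp [badP, hb]
      · rw [if_pos hb, Finset.card_filter]
        apply Finset.sum_congr rfl
        intro c _
        simp only [badP, ha, hb, ne_eq, not_false_eq_true, true_and]
    
  calc (∑ a : F, ∑ p : F × F, if badP (a, p.1, p.2) then 1 else 0)
      = ∑ a : F, if a ≠ 0 then (q - 1) + (q - 2) * (q - 2) else 0 := by
        exact Finset.sum_congr rfl (fun a _ => step1 a)
    _ = _ := by
        rw [← Finset.sum_filter, Finset.sum_const, smul_eq_mul, card_ne_zero_filter]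
lemma badP_iff (p : F × F × F) :
    badP p ↔ p.1 * p.2.1 * p.2.2 * (p.1 + p.2.1 + p.2.2) ≠ 0 := by
  simp [badP, mul_ne_zero_iff, and_assoc]

lemma card_N3' :
    (Finset.univ.filter (fun p : F × F × F =>
        p.1 * p.2.1 * p.2.2 * (p.1 + p.2.1 + p.2.2) = 0)).card +
      (Finset.univ.filter (badP (F := F))).card = (Fintype.card F) ^ 3 := by
  have h := Finset.card_filter_add_card_filter_not
    (s := (Finset.univ : Finset (F × F × F)))
    (p := fun p : F × F × F => p.1 * p.2.1 * p.2.2 * (p.1 + p.2.1 + p.2.2) = 0)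
  have h2 : Finset.univ.filter (fun p : F × F × F =>
      ¬ p.1 * p.2.1 * p.2.2 * (p.1 + p.2.1 + p.2.2) = 0) =
      Finset.univ.filter (badP (F := F)) := by
    apply Finset.filter_congr
    intro p _
    rw [badP_iff]
  rw [h2] at h
  rw [h, card_univ]
  simp [Fintype.card_prod]; ring

lemma card_fst_ne :
    (Finset.univ.filter (fun p : F × F × F => p.1 ≠ 0)).card =
      (Fintype.card F - 1) * (Fintype.card F) ^ 2 := by
  rw [Finset.card_filter, Fintype.sum_prod_type]
  have : ∀ a : F, (∑ _p : F × F, if a ≠ 0 then 1 else 0) =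
      if a ≠ 0 then (Fintype.card F) ^ 2 else 0 := by
    intro a
    by_cases ha : a = 0 <;> simp [ha, Fintype.card_prod]
    ring
  rw [Finset.sum_congr rfl (fun a _ => this a), ← Finset.sum_filter, Finset.sum_const,
    smul_eq_mul, Finset.filter_ne', card_erase_of_mem (mem_univ 0), card_univ]

lemma card_M3' :
    (Finset.univ.filter (fun p : F × F × F =>
        p.1 ≠ 0 ∧ p.1 * p.2.1 * p.2.2 * (p.1 + p.2.1 + p.2.2) = 0)).card +
      (Finset.univ.filter (badP (F := F))).card =
      (Fintype.card F - 1) * (Fintype.card F) ^ 2 := by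
  have h := Finset.card_filter_add_card_filter_not
    (s := Finset.univ.filter (fun p : F × F × F => p.1 ≠ 0))
    (p := fun p : F × F × F => p.1 * p.2.1 * p.2.2 * (p.1 + p.2.1 + p.2.2) = 0)
  rw [Finset.filter_filter, Finset.filter_filter] at h
  have h2 : Finset.univ.filter (fun p : F × F × F => p.1 ≠ 0 ∧
      ¬ p.1 * p.2.1 * p.2.2 * (p.1 + p.2.1 + p.2.2) = 0) =
      Finset.univ.filter (badP (F := F)) := by
    apply Finset.filter_congr
    intro p _
    rw [badP_iff]
    constructor
    · tauto
    · intro h; constructor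
      · intro h0; exact h (by rw [h0]; ring)
      · exact h
  rw [h2, card_fst_ne] at h
  exact h

lemma card_ker {k : ℕ} (hk : 1 ≤ k) (a : Fin k → F) (ha : a ≠ 0) :
    (Finset.univ.filter (fun x : Fin k → F => ∑ i, a i * x i = 0)).card =
      (Fintype.card F) ^ (k - 1) := by
  obtain ⟨j, hj⟩ : ∃ j, a j ≠ 0 := by
    by_contra h
    push_neg at h
    exact ha (funext h)
  set f : (Fin k → F) → F := fun x => ∑ i, a i * x i with hf
  have fsingle : ∀ c : F, f (Pi.single j c) = a j * c := by
    intro c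
    rw [hf]
    beta_reduce
    rw [Finset.sum_eq_single j]
    · rw [Pi.single_eq_same]
    · intro i _ hij
      rw [Pi.single_eq_of_ne hij, mul_zero]
    · intro h; exact absurd (mem_univ j) h
  have fsub : ∀ x y : Fin k → F, f (x - y) = f x - f y := by
    intro x y
    simp only [hf, Pi.sub_apply, mul_sub, Finset.sum_sub_distrib]
  have key : ∀ t : F, (Finset.univ.filter (fun x => f x = t)).card =
      (Finset.univ.filter (fun x => f x = 0)).card := by
    intro t
    set s : Fin k → F := Pi.single j ((a j)⁻¹ * t) with hs
    have hfs : f s = t := by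
      rw [hs, fsingle, ← mul_assoc, mul_inv_cancel₀ hj, one_mul]
    apply Finset.card_bij' (i := fun x _ => x - s) (j := fun y _ => y + s)
    · intro x hx
      simp only [mem_filter, mem_univ, true_and] at hx ⊢
      rw [fsub, hx, hfs, sub_self]
    · intro y hy
      simp only [mem_filter, mem_univ, true_and] at hy ⊢
      have : y + s - s = y := by ring
      calc f (y + s) = f (y + s - s) + f s := by rw [fsub]; ring
        _ = t := by rw [this, hy, hfs, zero_add]
    · intro x _; ring
    · intro y _; ring
  have htotal : (Fintype.card F) ^ k = (Fintype.card F) *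
      (Finset.univ.filter (fun x => f x = 0)).card := by
    have h1 := Finset.card_eq_sum_card_fiberwise
      (s := (Finset.univ : Finset (Fin k → F))) (t := Finset.univ) (f := f)
      (fun x _ => mem_univ (f x))
    rw [Finset.sum_congr rfl (fun t _ => key t), Finset.sum_const, smul_eq_mul, card_univ,
      card_univ] at h1
    rw [← h1, Fintype.card_fun, Fintype.card_fin]
  have hq : 0 < Fintype.card F := Fintype.card_pos
  have hpow : (Fintype.card F) ^ k = (Fintype.card F) * (Fintype.card F) ^ (k - 1) := by
    rw [← pow_succ']
    congr 1
    omega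
  rw [hpow] at htotal
  exact (Nat.eq_of_mul_eq_mul_left hq htotal).symm

lemma ncard_filter {α : Type} [Fintype α] (p : α → Prop) [DecidablePred p] :
    Set.ncard {x | p x} = (Finset.univ.filter p).card := by
  rw [Set.ncard_eq_toFinset_card', Set.toFinset_setOf]

lemma cond_iff {F : Type} [Field F] [Fintype F] [DecidableEq F] {k : ℕ} (hk : 3 ≤ k)
    (x : Fin k → F) :
    ((∏ i ∈ Finset.univ.filter (fun i : Fin k => (i : ℕ) < 3), x i) *
      (∑ i ∈ Finset.univ.filter (fun i : Fin k => (i : ℕ) < 3), x i) = 0) ↔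
    x ⟨0, by omega⟩ * x ⟨1, by omega⟩ * x ⟨2, by omega⟩ *
      (x ⟨0, by omega⟩ + x ⟨1, by omega⟩ + x ⟨2, by omega⟩) = 0 := by
  rw [filter_lt3_eq hk,
    Finset.prod_insert (by simp [Fin.ext_iff]), Finset.prod_insert (by simp [Fin.ext_iff]),
    Finset.prod_singleton,
    Finset.sum_insert (by simp [Fin.ext_iff]), Finset.sum_insert (by simp [Fin.ext_iff]),
    Finset.sum_singleton]
  constructor <;> intro h <;> linear_combination h


def stmt19D (F : Type) [Field F] [Fintype F] [DecidableEq F] (k : ℕ) : Set (Fin k → F) :=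
  {x | x ≠ 0 ∧
    (∏ i ∈ Finset.univ.filter (fun i : Fin k => (i : ℕ) < 3), x i) *
      (∑ i ∈ Finset.univ.filter (fun i : Fin k => (i : ℕ) < 3), x i) = 0}

theorem stmt_19 {F : Type} [Field F] [Fintype F] [DecidableEq F]
    (q k : ℕ) (hq : Fintype.card F = q) (hk : 3 ≤ k) :
    (Set.ncard (stmt19D F k) : ℤ) =
        4 * (q : ℤ) ^ (k - 1) - 6 * (q : ℤ) ^ (k - 2) + 3 * (q : ℤ) ^ (k - 3) - 1 ∧
    (∀ a : Fin k → F, a ≠ 0 →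
      3 * (q : ℤ) ^ (k - 1) - 6 * (q : ℤ) ^ (k - 2) + 3 * (q : ℤ) ^ (k - 3) ≤
        (Set.ncard {x : Fin k → F | x ∈ stmt19D F k ∧ ∑ i : Fin k, a i * x i ≠ 0} : ℤ)) ∧
    (Set.ncard {x : Fin k → F | x ∈ stmt19D F k ∧
        ∑ i : Fin k, (if (i : ℕ) = 0 then (1 : F) else 0) * x i ≠ 0} : ℤ) =
      3 * (q : ℤ) ^ (k - 1) - 6 * (q : ℤ) ^ (k - 2) + 3 * (q : ℤ) ^ (k - 3) := by
  subst hq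
  set q := Fintype.card F with hqdef
  have hq2 : 2 ≤ q := Fintype.one_lt_card
  set origcond : (Fin k → F) → Prop := fun x =>
    (∏ i ∈ Finset.univ.filter (fun i : Fin k => (i : ℕ) < 3), x i) *
      (∑ i ∈ Finset.univ.filter (fun i : Fin k => (i : ℕ) < 3), x i) = 0 with horigcond
  -- rewrite the condition in terms of the three coordinates
  have hcond : ∀ x : Fin k → F,
      origcond x ↔ x ⟨0, by omega⟩ * x ⟨1, by omega⟩ * x ⟨2, by omega⟩ *
        (x ⟨0, by omega⟩ + x ⟨1, by omega⟩ + x ⟨2, by omega⟩) = 0 :=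
    fun x => cond_iff hk x
  -- cardinalities
  set nB : ℕ := (Finset.univ.filter (badP (F := F))).card with hnB
  set N3 : ℕ := (Finset.univ.filter (fun p : F × F × F =>
      p.1 * p.2.1 * p.2.2 * (p.1 + p.2.1 + p.2.2) = 0)).card with hN3def
  set M3 : ℕ := (Finset.univ.filter (fun p : F × F × F =>
      p.1 ≠ 0 ∧ p.1 * p.2.1 * p.2.2 * (p.1 + p.2.1 + p.2.2) = 0)).card with hM3def
  have h0mem : (0 : Fin k → F) ∈ Finset.univ.filter origcond := by
    rw [Finset.mem_filter]
    refine ⟨Finset.mem_univ _, ?_⟩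
    rw [hcond]
    simp
  have hOrig : (Finset.univ.filter origcond).card = N3 * q ^ (k - 3) := by
    rw [Finset.filter_congr (fun x _ => hcond x)]
    exact card_cond (F := F) hk (fun a b c => a * b * c * (a + b + c) = 0)
  have hDset : Finset.univ.filter (fun x : Fin k → F => x ≠ 0 ∧ origcond x) =
      (Finset.univ.filter origcond).erase 0 := by
    ext x
    simp only [Finset.mem_filter, Finset.mem_univ, true_and, Finset.mem_erase]
  have hone : 1 ≤ N3 * q ^ (k - 3) := by
    rw [← hOrig]
    exact Finset.card_pos.mpr ⟨0, h0mem⟩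
  have hcardD : (Finset.univ.filter (fun x : Fin k → F => x ≠ 0 ∧ origcond x)).card =
      N3 * q ^ (k - 3) - 1 := by
    rw [hDset, Finset.card_erase_of_mem h0mem, hOrig]
  -- integer values
  have hnBZ : (nB : ℤ) = ((q : ℤ) - 1) * (((q : ℤ) - 1) + ((q : ℤ) - 2) * ((q : ℤ) - 2)) := by
    rw [hnB, card_bad, ← hqdef]
    have e1 : ((q - 1 : ℕ) : ℤ) = (q : ℤ) - 1 := by omega
    have e2 : ((q - 2 : ℕ) : ℤ) = (q : ℤ) - 2 := by omega
    push_cast [e1, e2]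
    ring
  have hN3Z : (N3 : ℤ) = 4 * (q : ℤ) ^ 2 - 6 * (q : ℤ) + 3 := by
    have h := card_N3' (F := F)
    rw [← hnB, ← hN3def] at h
    have : (N3 : ℤ) + (nB : ℤ) = (q : ℤ) ^ 3 := by exact_mod_cast congrArg (Nat.cast : ℕ → ℤ) h
    rw [hnBZ] at this
    linarith [this, sq_nonneg ((q:ℤ))]
  have hM3Z : (M3 : ℤ) = 3 * (q : ℤ) ^ 2 - 6 * (q : ℤ) + 3 := by
    have h := card_M3' (F := F)
    rw [← hnB, ← hM3def] at h
    have h2 : (M3 : ℤ) + (nB : ℤ) = ((q - 1 : ℕ) : ℤ) * (q : ℤ) ^ 2 := by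
      exact_mod_cast congrArg (Nat.cast : ℕ → ℤ) h
    have e1 : ((q - 1 : ℕ) : ℤ) = (q : ℤ) - 1 := by omega
    rw [e1, hnBZ] at h2
    linarith [h2]
  have ek1 : k - 1 = (k - 3) + 2 := by omega
  have ek2 : k - 2 = (k - 3) + 1 := by omega
  -- value of |D| as an integer
  have hDint : ((Finset.univ.filter (fun x : Fin k → F => x ≠ 0 ∧ origcond x)).card : ℤ) =
      4 * (q : ℤ) ^ (k - 1) - 6 * (q : ℤ) ^ (k - 2) + 3 * (q : ℤ) ^ (k - 3) - 1 := by
    rw [hcardD, Nat.cast_sub hone]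
    push_cast
    rw [hN3Z, ek1, ek2, pow_add, pow_add]
    ring
  refine ⟨?_, ?_, ?_⟩
  · rw [show stmt19D F k = {x : Fin k → F | x ≠ 0 ∧ origcond x} from rfl, ncard_filter]
    exact hDint
  · intro a ha
    have hk1 : 1 ≤ k := by omega
    have hq0 : 0 < q := by omega
    rw [show {x : Fin k → F | x ∈ stmt19D F k ∧ ∑ i : Fin k, a i * x i ≠ 0} =
      {x : Fin k → F | (x ≠ 0 ∧ origcond x) ∧ ¬ (∑ i : Fin k, a i * x i = 0)} from rfl,
      ncard_filter]
    have hsplit := Finset.card_filter_add_card_filter_not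
      (s := Finset.univ.filter (fun x : Fin k → F => x ≠ 0 ∧ origcond x))
      (p := fun x : Fin k → F => ∑ i : Fin k, a i * x i = 0)
    rw [Finset.filter_filter, Finset.filter_filter, hcardD] at hsplit
    have h0ker : (0 : Fin k → F) ∈ Finset.univ.filter
        (fun x : Fin k → F => ∑ i : Fin k, a i * x i = 0) := by
      simp
    have hsub : Finset.univ.filter
        (fun x : Fin k → F => (x ≠ 0 ∧ origcond x) ∧ ∑ i : Fin k, a i * x i = 0) ⊆
        (Finset.univ.filter (fun x : Fin k → F => ∑ i : Fin k, a i * x i = 0)).erase 0 := by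
      intro x hx
      simp only [Finset.mem_filter, Finset.mem_univ, true_and, Finset.mem_erase] at hx ⊢
      exact ⟨hx.1.1, hx.2⟩
    have hle : (Finset.univ.filter
        (fun x : Fin k → F => (x ≠ 0 ∧ origcond x) ∧ ∑ i : Fin k, a i * x i = 0)).card ≤
        q ^ (k - 1) - 1 := by
      calc _ ≤ ((Finset.univ.filter
            (fun x : Fin k → F => ∑ i : Fin k, a i * x i = 0)).erase 0).card :=
          Finset.card_le_card hsub
        _ = q ^ (k - 1) - 1 := by
          rw [Finset.card_erase_of_mem h0ker, card_ker hk1 a ha]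
    have hpow1 : 1 ≤ q ^ (k - 1) := Nat.one_le_pow _ _ hq0
    have hsplitZ : ((Finset.univ.filter
        (fun x : Fin k → F => (x ≠ 0 ∧ origcond x) ∧ ∑ i : Fin k, a i * x i = 0)).card : ℤ) +
        ((Finset.univ.filter
        (fun x : Fin k → F => (x ≠ 0 ∧ origcond x) ∧ ¬ ∑ i : Fin k, a i * x i = 0)).card : ℤ) =
        ((N3 * q ^ (k - 3) - 1 : ℕ) : ℤ) := by
      exact_mod_cast hsplit
    have hD2 : ((N3 * q ^ (k - 3) - 1 : ℕ) : ℤ) =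
        4 * (q : ℤ) ^ (k - 1) - 6 * (q : ℤ) ^ (k - 2) + 3 * (q : ℤ) ^ (k - 3) - 1 := by
      rw [← hcardD]; exact hDint
    rw [hD2] at hsplitZ
    have hleZ : ((Finset.univ.filter
        (fun x : Fin k → F => (x ≠ 0 ∧ origcond x) ∧ ∑ i : Fin k, a i * x i = 0)).card : ℤ) ≤
        (q : ℤ) ^ (k - 1) - 1 := by
      have hc : ((q ^ (k - 1) - 1 : ℕ) : ℤ) = (q : ℤ) ^ (k - 1) - 1 := by
        push_cast [Nat.cast_sub hpow1]; ring
      calc ((Finset.univ.filter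
          (fun x : Fin k → F => (x ≠ 0 ∧ origcond x) ∧ ∑ i : Fin k, a i * x i = 0)).card : ℤ)
          ≤ ((q ^ (k - 1) - 1 : ℕ) : ℤ) := by exact_mod_cast hle
        _ = (q : ℤ) ^ (k - 1) - 1 := hc
    linarith
  · -- equality case  a = e1
    have hsum : ∀ x : Fin k → F,
        (∑ i : Fin k, (if (i : ℕ) = 0 then (1 : F) else 0) * x i) = x ⟨0, by omega⟩ := by
      intro x
      rw [Finset.sum_eq_single (⟨0, by omega⟩ : Fin k)]
      · rw [if_pos rfl, one_mul]
      · intro i _ hne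
        rw [if_neg (fun h => hne (Fin.ext (by simpa using h))), zero_mul]
      · intro h; exact absurd (Finset.mem_univ _) h
    rw [show {x : Fin k → F | x ∈ stmt19D F k ∧
        ∑ i : Fin k, (if (i : ℕ) = 0 then (1 : F) else 0) * x i ≠ 0} =
      {x : Fin k → F | (x ≠ 0 ∧ origcond x) ∧
        ¬ (∑ i : Fin k, (if (i : ℕ) = 0 then (1 : F) else 0) * x i = 0)} from rfl,
      ncard_filter]
    have hcong : Finset.univ.filter (fun x : Fin k → F => (x ≠ 0 ∧ origcond x) ∧
        ¬ (∑ i : Fin k, (if (i : ℕ) = 0 then (1 : F) else 0) * x i = 0)) =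
        Finset.univ.filter (fun x : Fin k → F =>
          x ⟨0, by omega⟩ ≠ 0 ∧ x ⟨0, by omega⟩ * x ⟨1, by omega⟩ * x ⟨2, by omega⟩ * (x ⟨0, by omega⟩ + x ⟨1, by omega⟩ + x ⟨2, by omega⟩) = 0) := by
      apply Finset.filter_congr
      intro x _
      rw [hsum x, ← hcond x]
      constructor
      · rintro ⟨⟨_, hc⟩, hne⟩; exact ⟨hne, hc⟩
      · rintro ⟨hne, hc⟩
        refine ⟨⟨?_, hc⟩, hne⟩
        intro h0
        exact hne (by rw [h0]; rfl)
    rw [hcong]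
    have := card_cond (F := F) hk (fun a b c => a ≠ 0 ∧ a * b * c * (a + b + c) = 0)
    rw [this, ← hM3def]
    have hMone : (0 : ℤ) ≤ (M3 : ℤ) := by positivity
    push_cast
    rw [hM3Z, ek1, ek2, pow_add, pow_add]
    ring
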